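/- Let r ≥ 3, let α_1,...,α_r ∈ ℝ^N satisfy ∑_j α_j = 0 with any r−1 linearly independent, and let g_1,...,g_n ∈ ℝ^N be the Gale transform of affinely spanning a_1,...,a_n ∈ ℝ^d. Suppose I_1,...,I_r ⊆ [n] are pairwise disjoint and nonempty, and for all i,j: if i ∈ I_j then ⟨α_j, g_i⟩ > 0 and ⟨α_k, g_i⟩ = 0 for k ∉ {j−1, j} (mod r); if i ∉ ⊔_j I_j then ⟨α_j, g_i⟩ = 0 for all j. Then there exist t_i > 0 (i ∈ ⊔_j I_j) with ∑_{i∈I_j} t_i = 1 for all j and ∑_{i∈I_1} t_i a_i = ... = ∑_{i∈I_r} t_i a_i. -/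

import Mathlib

/-- The `(d+1) × n` matrix whose `j`-th column is `(a j, 1)`. -/
noncomputable def galeMatrix {K : Type*} [RCLike K] {d n : ℕ}
    (a : Fin n → Fin d → K) : Matrix (Fin (d + 1)) (Fin n) K :=
  fun i j => if h : (i : ℕ) < d then a j ⟨i, h⟩ else 1

/-- `g` is a Gale transform of `a`: there is a basis `b` of `ker A` such that
`(g j) i = conj ((b i) j)`. -/
def IsGaleTransform {K : Type*} [RCLike K] {d n : ℕ}
    (a : Fin n → Fin d → K) (g : Fin n → Fin (n - d - 1) → K) : Prop :=
  ∃ b : Fin (n - d - 1) → (Fin n → K),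
    (∀ i, (galeMatrix a).mulVecLin (b i) = 0) ∧
    LinearIndependent K b ∧
    Submodule.span K (Set.range b) = LinearMap.ker (galeMatrix a).mulVecLin ∧
    (∀ j i, g j i = starRingEnd K (b i j))

private lemma sum_split_aux {n : ℕ} {M : Type*} [AddCommMonoid M]
    (A B : Finset (Fin n)) (hAB : Disjoint A B) (F : Fin n → M)
    (h0 : ∀ i, i ∉ A → i ∉ B → F i = 0) :
    ∑ i, F i = ∑ i ∈ A, F i + ∑ i ∈ B, F i := by
  rw [← Finset.sum_union hAB]
  exact (Finset.sum_subset (Finset.subset_univ _) (fun i _ hi =>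
    h0 i (fun h => hi (Finset.mem_union_left _ h))
      (fun h => hi (Finset.mem_union_right _ h)))).symm

open Fin.NatCast in
private lemma cyc_const {r : ℕ} [NeZero r] {M : Type*} (f : Fin r → M)
    (h : ∀ j, f j = f (j + 1)) : ∀ j, f j = f 0 := by
  have key : ∀ m : ℕ, f ((m : ℕ) : Fin r) = f 0 := by
    intro m
    induction m with
    | zero => simp
    | succ k ih =>
      push_cast
      rw [← h ((k : ℕ) : Fin r)]
      exact ih
  intro j
  rw [← Fin.cast_val_eq_self j]; exact key j.val

/-- a linear `r`-fan distribution of the Gale dual (given by the `α_j`)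
yields a proper Tverberg `r`-partition of the points `a_i`. -/
theorem stmt14 (r n d : ℕ) (hr : 3 ≤ r) [NeZero r]
    (a : Fin n → Fin d → ℝ) (g : Fin n → Fin (n - d - 1) → ℝ)
    (ha : affineSpan ℝ (Set.range a) = ⊤)
    (hg : IsGaleTransform a g)
    (α : Fin r → (Fin (n - d - 1) → ℝ))
    (hαsum : ∑ j, α j = 0)
    (hαind : ∀ j : Fin r, LinearIndependent ℝ (fun k : {k : Fin r // k ≠ j} => α k))
    (I : Fin r → Finset (Fin n))
    (hne : ∀ j, (I j).Nonempty)
    (hdisj : Pairwise (Function.onFun Disjoint I))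
    (hpos : ∀ j, ∀ i ∈ I j, 0 < ∑ k, α j k * g i k)
    (hzero : ∀ j, ∀ i ∈ I j, ∀ k : Fin r, k ≠ j - 1 → k ≠ j →
      ∑ l, α k l * g i l = 0)
    (hout : ∀ i, (∀ j, i ∉ I j) → ∀ j, ∑ k, α j k * g i k = 0) :
    ∃ t : Fin n → ℝ, (∀ j, ∀ i ∈ I j, 0 < t i) ∧
      (∀ j, ∑ i ∈ I j, t i = 1) ∧
      ∀ j, ∑ i ∈ I j, t i • a i = ∑ i ∈ I 0, t i • a i := by
  classical
  obtain ⟨b, hbker, -, -, hgb⟩ := hg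
  set L : Fin r → Fin n → ℝ := fun j i => ∑ k, α j k * g i k with hL
  -- basic facts about Fin r arithmetic
  have hone : (1 : Fin r) ≠ 0 := by
    intro h
    have := Fin.one_eq_zero_iff.mp h
    omega
  have hne1 : ∀ j : Fin r, j ≠ j + 1 := by
    intro j h
    exact hone (by simpa using (left_eq_add.mp h))
  -- kernel facts
  have hg' : ∀ i k, g i k = b k i := by
    intro i k; rw [hgb i k]; simp
  have hrow : ∀ k (i : Fin (d + 1)), ∑ j, galeMatrix a i j * b k j = 0 := by
    intro k i
    have := congrFun (hbker k) i
    simpa [Matrix.mulVecLin_apply, Matrix.mulVec, dotProduct] using this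
  have hsum0 : ∀ k, ∑ i, b k i = 0 := by
    intro k
    have := hrow k (Fin.last d)
    simpa [galeMatrix, Fin.last] using this
  have hsumA : ∀ k (m : Fin d), ∑ i, a i m * b k i = 0 := by
    intro k m
    have := hrow k (Fin.castSucc m)
    simpa [galeMatrix, Fin.castSucc, Fin.is_lt] using this
  -- affine dependence: each row of λ sums to zero
  have hA : ∀ j, ∑ i, L j i = 0 := by
    intro j
    simp only [hL, hg']
    rw [Finset.sum_comm]
    refine Finset.sum_eq_zero fun k _ => ?_
    rw [← Finset.mul_sum, hsum0, mul_zero]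
  have hV0 : ∀ j (m : Fin d), ∑ i, L j i * a i m = 0 := by
    intro j m
    simp only [hL, hg', Finset.sum_mul]
    rw [Finset.sum_comm]
    refine Finset.sum_eq_zero fun k _ => ?_
    have : ∀ i, α j k * b k i * a i m = α j k * (a i m * b k i) := by intro i; ring
    simp only [this, ← Finset.mul_sum, hsumA, mul_zero]
  -- each column of λ sums to zero
  have hC : ∀ i, ∑ j, L j i = 0 := by
    intro i
    simp only [hL]
    rw [Finset.sum_comm]
    refine Finset.sum_eq_zero fun k _ => ?_
    rw [← Finset.sum_mul]
    have : ∑ j, α j k = 0 := by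
      have := congrFun hαsum k
      simpa using this
    rw [this, zero_mul]
  -- for i ∈ I j', the two nonzero entries are opposite
  have hE : ∀ j', ∀ i ∈ I j', L (j' - 1) i = - L j' i := by
    intro j' i hi
    have hnn : j' - 1 ≠ j' := by
      intro h
      exact hone (sub_eq_self.mp h)
    have := hC i
    rw [Finset.sum_eq_add_of_mem (j' - 1) j' (Finset.mem_univ _) (Finset.mem_univ _) hnn
      (fun c _ hc => hzero j' i hi c hc.1 hc.2)] at this
    linarith
  -- vanishing of row j outside I j ∪ I (j+1)
  have hvan : ∀ j i, i ∉ I j → i ∉ I (j + 1) → L j i = 0 := by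
    intro j i hij hij1
    by_cases h : ∀ j'', i ∉ I j''
    · exact hout i h j
    · push_neg at h
      obtain ⟨j'', hj''⟩ := h
      refine hzero j'' i hj'' j ?_ ?_
      · intro h
        apply hij1
        have : j'' = j + 1 := by
          rw [h]; exact (sub_add_cancel _ _).symm
        rwa [← this]
      · intro h; rw [h] at hij; exact hij hj''
  -- row sums restricted to the parts
  set S : Fin r → ℝ := fun j => ∑ i ∈ I j, L j i with hS
  set V : Fin r → (Fin d → ℝ) := fun j => ∑ i ∈ I j, L j i • a i with hV
  have hdisj' : ∀ j : Fin r, Disjoint (I j) (I (j + 1)) :=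
    fun j => hdisj (hne1 j)
  have hneg : ∀ j, ∀ i ∈ I (j + 1), L j i = - L (j + 1) i := by
    intro j i hi
    have := hE (j + 1) i hi
    simpa using this
  have hSper : ∀ j, S j = S (j + 1) := by
    intro j
    have h0 := hA j
    rw [sum_split_aux (I j) (I (j + 1)) (hdisj' j) (L j) (hvan j)] at h0
    have : ∑ i ∈ I (j + 1), L j i = - S (j + 1) := by
      rw [hS]
      simp only []
      rw [← Finset.sum_neg_distrib]
      exact Finset.sum_congr rfl (fun i hi => hneg j i hi)
    rw [this] at h0
    linarith
  have hVper : ∀ j, V j = V (j + 1) := by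
    intro j
    have h0 : ∑ i, L j i • a i = 0 := by
      funext m
      simpa [Finset.sum_apply] using hV0 j m
    rw [sum_split_aux (I j) (I (j + 1)) (hdisj' j) (fun i => L j i • a i)
      (fun i h1 h2 => by show L j i • a i = 0; rw [hvan j i h1 h2, zero_smul])] at h0
    have : ∑ i ∈ I (j + 1), L j i • a i = - V (j + 1) := by
      rw [hV]
      simp only []
      rw [← Finset.sum_neg_distrib]
      refine Finset.sum_congr rfl (fun i hi => ?_)
      rw [hneg j i hi, neg_smul]
    rw [this] at h0
    have h1 := add_eq_zero_iff_eq_neg.mp h0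
    simpa using h1
  have hSconst := cyc_const S hSper
  have hVconst := cyc_const V hVper
  have hS0pos : 0 < S 0 :=
    Finset.sum_pos (fun i hi => hpos 0 i hi) (hne 0)
  have hS0ne : S 0 ≠ 0 := ne_of_gt hS0pos
  -- define the coefficients
  refine ⟨fun i => (∑ j, if i ∈ I j then L j i else 0) / S 0, ?_, ?_, ?_⟩
  · -- positivity; first a formula for t on I j
    intro j i hi
    show 0 < (∑ j', if i ∈ I j' then L j' i else 0) / S 0
    have hnum : (∑ j', if i ∈ I j' then L j' i else 0) = L j i := by
      rw [Finset.sum_eq_single_of_mem j (Finset.mem_univ _)]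
      · rw [if_pos hi]
      · intro j' _ hj'
        rw [if_neg (fun h => (Finset.disjoint_left.mp (hdisj hj')) h hi)]
    rw [hnum]
    exact div_pos (hpos j i hi) hS0pos
  · intro j
    show ∑ i ∈ I j, (∑ j', if i ∈ I j' then L j' i else 0) / S 0 = 1
    have : ∀ i ∈ I j, (∑ j', if i ∈ I j' then L j' i else 0) / S 0 = L j i / S 0 := by
      intro i hi
      congr 1
      rw [Finset.sum_eq_single_of_mem j (Finset.mem_univ _)]
      · rw [if_pos hi]
      · intro j' _ hj'
        rw [if_neg (fun h => (Finset.disjoint_left.mp (hdisj hj')) h hi)]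
    rw [Finset.sum_congr rfl this, ← Finset.sum_div]
    rw [show ∑ i ∈ I j, L j i = S j from rfl, hSconst j]
    exact div_self hS0ne
  · intro j
    show ∑ i ∈ I j, ((∑ j'', if i ∈ I j'' then L j'' i else 0) / S 0) • a i
        = ∑ i ∈ I 0, ((∑ j'', if i ∈ I j'' then L j'' i else 0) / S 0) • a i
    have key : ∀ j', ∑ i ∈ I j', ((∑ j'', if i ∈ I j'' then L j'' i else 0) / S 0) • a i
        = (S 0)⁻¹ • V j' := by
      intro j'
      have : ∀ i ∈ I j',
          ((∑ j'', if i ∈ I j'' then L j'' i else 0) / S 0) • a i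
            = (S 0)⁻¹ • (L j' i • a i) := by
        intro i hi
        have hnum : (∑ j'', if i ∈ I j'' then L j'' i else 0) = L j' i := by
          rw [Finset.sum_eq_single_of_mem j' (Finset.mem_univ _)]
          · rw [if_pos hi]
          · intro j'' _ hj''
            rw [if_neg (fun h => (Finset.disjoint_left.mp (hdisj hj'')) h hi)]
        rw [hnum, smul_smul, div_eq_inv_mul]
      rw [Finset.sum_congr rfl this, ← Finset.smul_sum]
    rw [key j, key 0, hVconst j]
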